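/- If ρ(y,x) > 0 for a.e. pairs with |y-x| < ε and the symmetrized quadratic form (1/2)∫_Ω∫_{H_ε(x)∩Ω} ρ(y,x)|(w(y)-w(x))·e_{y-x}|² dy dx equals zero for a continuous field w on a connected open bounded Ω, then w is a rigid motion: w(x) = Qx + c with Q skew-symmetric. -/

import Mathlib

open MeasureTheory
open scoped RealInnerProductSpace

/-- The unit vector `e_{y-x} = (y-x)/|y-x|`. -/
noncomputable def unitVec {d : ℕ} (y x : EuclideanSpace ℝ (Fin d)) :
    EuclideanSpace ℝ (Fin d) := ‖y - x‖⁻¹ • (y - x)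

open Metric

theorem aff_zero {d : ℕ} (L : EuclideanSpace ℝ (Fin d) →ₗ[ℝ] EuclideanSpace ℝ (Fin d))
    (c s : EuclideanSpace ℝ (Fin d)) (δ : ℝ) (hδ : 0 < δ)
    (h : ∀ y ∈ Metric.ball s δ, L y + c = 0) : ∀ y, L y + c = 0 := by
  have hsmall : ∀ v : EuclideanSpace ℝ (Fin d), ‖v‖ < δ → L v = 0 := by
    intro v hv
    have h1 : L s + L v + c = 0 := by
      have := h (s + v) (by simpa [dist_eq_norm] using hv)
      rwa [map_add] at this
    have h2 : L s + (2⁻¹ : ℝ) • L v + c = 0 := by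
      have := h (s + (2⁻¹ : ℝ) • v) (by
        simp only [Metric.mem_ball, dist_eq_norm, add_sub_cancel_left, norm_smul]
        simp only [norm_inv, Real.norm_ofNat]
        nlinarith [norm_nonneg v])
      rwa [map_add, L.map_smul] at this
    have hsub : L v - (2⁻¹ : ℝ) • L v = 0 := by
      have e : L v - (2⁻¹ : ℝ) • L v
          = (L s + L v + c) - (L s + (2⁻¹ : ℝ) • L v + c) := by abel
      rw [e, h1, h2, sub_zero]
    have e2 : ((1 : ℝ) - 2⁻¹) • L v = 0 := by
      rw [sub_smul, one_smul]; exact hsub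
    exact (smul_eq_zero.mp e2).resolve_left (by norm_num)
  have hL : ∀ v, L v = 0 := by
    intro v
    rcases eq_or_ne v 0 with rfl | hv0
    · simp
    · have hn : 0 < ‖v‖ := norm_pos_iff.mpr hv0
      have hker : L ((δ / (2 * ‖v‖)) • v) = 0 := by
        apply hsmall
        rw [norm_smul, Real.norm_eq_abs, abs_of_pos (by positivity)]
        rw [div_mul_eq_mul_div, mul_comm]
        rw [div_lt_iff₀ (by positivity)]
        nlinarith
      rw [L.map_smul, smul_eq_zero] at hker
      rcases hker with h' | h'
      · exact absurd h' (by positivity)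
      · exact h'
  intro y
  have := h s (Metric.mem_ball_self hδ)
  rw [hL s] at this
  rw [hL y, this]

noncomputable def rowsMap {d : ℕ} (b : Fin d → EuclideanSpace ℝ (Fin d)) :
    EuclideanSpace ℝ (Fin d) →ₗ[ℝ] EuclideanSpace ℝ (Fin d) where
  toFun u := WithLp.toLp 2 (fun i => ⟪b i, u⟫)
  map_add' u v := by ext i; simp [inner_add_right]
  map_smul' t u := by ext i; simp [inner_smul_right]

theorem local_rigid {d : ℕ} (w : EuclideanSpace ℝ (Fin d) → EuclideanSpace ℝ (Fin d))
    (z : EuclideanSpace ℝ (Fin d)) (r : ℝ) (hr : 0 < r)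
    (hP : ∀ x ∈ ball z r, ∀ y ∈ ball z r, ⟪w y - w x, y - x⟫ = 0) :
    ∃ Q : EuclideanSpace ℝ (Fin d) →ₗ[ℝ] EuclideanSpace ℝ (Fin d),
      (∀ u u' : EuclideanSpace ℝ (Fin d), ⟪Q u, u'⟫ = -⟪u, Q u'⟫) ∧
      ∀ x ∈ ball z r, w x = Q (x - z) + w z := by
  have hz : z ∈ ball z r := mem_ball_self hr
  have key : ∀ x ∈ ball z r, ∀ y ∈ ball z r,
      ⟪w y - w z, x - z⟫ = -⟪w x - w z, y - z⟫ := by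
    intro x hx y hy
    have h1 := hP x hx y hy
    have h2 := hP z hz y hy
    have h3 := hP z hz x hx
    have e1 : w y - w x = (w y - w z) - (w x - w z) := by abel
    have e2 : y - x = (y - z) - (x - z) := by abel
    have expand : ⟪(w y - w z) - (w x - w z), (y - z) - (x - z)⟫
        = ⟪w y - w z, y - z⟫ - ⟪w y - w z, x - z⟫ - ⟪w x - w z, y - z⟫
          + ⟪w x - w z, x - z⟫ := by
      simp only [inner_sub_left, inner_sub_right]; ring
    rw [e1, e2, expand] at h1
    linarith
  set y' : Fin d → EuclideanSpace ℝ (Fin d) :=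
    fun i => z + (r / 2) • EuclideanSpace.single i 1 with hy'
  have hy'mem : ∀ i, y' i ∈ ball z r := by
    intro i
    simp only [hy', mem_ball, dist_eq_norm, add_sub_cancel_left, norm_smul,
      EuclideanSpace.norm_single, norm_one, mul_one, Real.norm_eq_abs,
      abs_of_pos (by positivity : (0:ℝ) < r / 2)]
    linarith
  set b : Fin d → EuclideanSpace ℝ (Fin d) :=
    fun i => (-(2 / r)) • (w (y' i) - w z) with hb
  set Q := rowsMap b with hQ
  have hvQ : ∀ x ∈ ball z r, w x - w z = Q (x - z) := by
    intro x hx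
    ext i
    show (w x - w z) i = ⟪b i, x - z⟫
    have e1 : ⟪b i, x - z⟫ = (-(2 / r)) * ⟪w (y' i) - w z, x - z⟫ := by
      simp only [hb]; exact real_inner_smul_left _ _ _
    have e2 : ⟪w (y' i) - w z, x - z⟫
        = -⟪w x - w z, (r / 2) • EuclideanSpace.single i 1⟫ := by
      rw [key x hx (y' i) (hy'mem i)]
      simp [hy']
    have e3 : ⟪w x - w z, (r / 2) • EuclideanSpace.single i 1⟫
        = (r / 2) * ((w x - w z) i) := by
      rw [real_inner_smul_right, EuclideanSpace.inner_single_right]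
      simp [mul_comm]
    rw [e1, e2, e3]
    field_simp
  have hskew : ∀ u u' : EuclideanSpace ℝ (Fin d), ⟪Q u, u'⟫ = -⟪u, Q u'⟫ := by
    intro u u'
    set t : ℝ := r / (2 * (1 + ‖u‖ + ‖u'‖)) with ht
    have hden : 0 < 1 + ‖u‖ + ‖u'‖ := by positivity
    have htpos : 0 < t := by positivity
    have hmem : ∀ e : EuclideanSpace ℝ (Fin d), ‖e‖ ≤ ‖u‖ + ‖u'‖ → z + t • e ∈ ball z r := by
      intro e he
      simp only [mem_ball, dist_eq_norm, add_sub_cancel_left, norm_smul, Real.norm_eq_abs,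
        abs_of_pos htpos]
      have h1 : t * ‖e‖ ≤ t * (‖u‖ + ‖u'‖) :=
        mul_le_mul_of_nonneg_left he (le_of_lt htpos)
      have h2 : t * (‖u‖ + ‖u'‖) < r := by
        rw [ht, div_mul_eq_mul_div, div_lt_iff₀ (by positivity)]
        nlinarith [norm_nonneg u, norm_nonneg u']
      linarith
    have hxm : z + t • u ∈ ball z r := hmem u (by nlinarith [norm_nonneg u'])
    have hym : z + t • u' ∈ ball z r := hmem u' (by nlinarith [norm_nonneg u])
    have hk := key (z + t • u) hxm (z + t • u') hym
    rw [hvQ _ hxm, hvQ _ hym] at hk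
    simp only [add_sub_cancel_left] at hk
    rw [Q.map_smul, Q.map_smul, real_inner_smul_left, real_inner_smul_right,
      real_inner_smul_left, real_inner_smul_right] at hk
    have hres : ⟪Q u', u⟫ = -⟪Q u, u'⟫ := by
      have ht2 : t * t ≠ 0 := by positivity
      have : t * (t * ⟪Q u', u⟫) - t * (t * -⟪Q u, u'⟫) = 0 := by rw [hk]; ring
      have : (t * t) * (⟪Q u', u⟫ + ⟪Q u, u'⟫) = 0 := by linarith [this]  -- may fail; use nlinarith
      have := mul_eq_zero.mp this
      rcases this with h' | h'
      · exact absurd h' ht2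
      · linarith
    linarith [hres, real_inner_comm u (Q u')]
  refine ⟨Q, hskew, fun x hx => ?_⟩
  have := hvQ x hx
  rw [← this]; abel



theorem pointwise_zero {d : ℕ} (ε : ℝ) (hε : 0 < ε)
    (Ω : Set (EuclideanSpace ℝ (Fin d))) (hΩo : IsOpen Ω)
    (ρ : EuclideanSpace ℝ (Fin d) → EuclideanSpace ℝ (Fin d) → ℝ)
    (hρpos : ∀ x y : EuclideanSpace ℝ (Fin d), 0 < ‖y - x‖ → ‖y - x‖ < ε → 0 < ρ y x)
    (w : EuclideanSpace ℝ (Fin d) → EuclideanSpace ℝ (Fin d))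
    (hw : ContinuousOn w Ω)
    (hint : IntegrableOn
      (fun p : EuclideanSpace ℝ (Fin d) × EuclideanSpace ℝ (Fin d) =>
        ρ p.2 p.1 * ⟪w p.2 - w p.1, unitVec p.2 p.1⟫ ^ 2)
      {p : EuclideanSpace ℝ (Fin d) × EuclideanSpace ℝ (Fin d) |
        p.1 ∈ Ω ∧ p.2 ∈ Metric.ball p.1 ε ∩ Ω})
    (hzero : (1 / 2) * ∫ x in Ω, ∫ y in Metric.ball x ε ∩ Ω,
        ρ y x * ⟪w y - w x, unitVec y x⟫ ^ 2 = 0) :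
    ∀ x ∈ Ω, ∀ y ∈ Ω, dist y x < ε → ⟪w y - w x, y - x⟫ = 0 := by
  classical
  set g : EuclideanSpace ℝ (Fin d) × EuclideanSpace ℝ (Fin d) → ℝ := fun p => ρ p.2 p.1 * ⟪w p.2 - w p.1, unitVec p.2 p.1⟫ ^ 2 with hg
  set S : Set (EuclideanSpace ℝ (Fin d) × EuclideanSpace ℝ (Fin d)) := {p | p.1 ∈ Ω ∧ p.2 ∈ ball p.1 ε ∩ Ω} with hS
  have hSopen : IsOpen S := by
    have h1 : IsOpen {p : EuclideanSpace ℝ (Fin d) × EuclideanSpace ℝ (Fin d) | p.1 ∈ Ω} :=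
      hΩo.preimage continuous_fst
    have h2 : IsOpen {p : EuclideanSpace ℝ (Fin d) × EuclideanSpace ℝ (Fin d) | dist p.2 p.1 < ε} :=
      isOpen_lt (continuous_dist.comp (continuous_snd.prodMk continuous_fst)) continuous_const
    have h3 : IsOpen {p : EuclideanSpace ℝ (Fin d) × EuclideanSpace ℝ (Fin d) | p.2 ∈ Ω} :=
      hΩo.preimage continuous_snd
    have he : S = {p : EuclideanSpace ℝ (Fin d) × EuclideanSpace ℝ (Fin d) | p.1 ∈ Ω} ∩
        ({p | dist p.2 p.1 < ε} ∩ {p | p.2 ∈ Ω}) := by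
      ext p; simp only [hS, Set.mem_setOf_eq, Set.mem_inter_iff, mem_ball] <;> tauto
    rw [he]; exact h1.inter (h2.inter h3)
  -- nonnegativity
  have hgnn : ∀ x y : EuclideanSpace ℝ (Fin d), dist y x < ε → 0 ≤ g (x, y) := by
    intro x y hd
    rcases eq_or_ne y x with rfl | hne
    · simp [hg]
    · have h1 : 0 < ‖y - x‖ := by
        rw [norm_pos_iff, sub_ne_zero]; exact hne
      have h2 : ‖y - x‖ < ε := by rwa [← dist_eq_norm]
      exact mul_nonneg (le_of_lt (hρpos x y h1 h2)) (sq_nonneg _)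
  -- indicator function on the product
  set G : EuclideanSpace ℝ (Fin d) × EuclideanSpace ℝ (Fin d) → ℝ := S.indicator g with hG
  have hGint : Integrable G volume :=
    (integrable_indicator_iff hSopen.measurableSet).mpr hint
  rw [Measure.volume_eq_prod] at hGint
  have hslice : ∀ᵐ x : EuclideanSpace ℝ (Fin d), Integrable (fun y => G (x, y)) volume := hGint.prod_right_ae
  have hHint : Integrable (fun x => ∫ y, G (x, y)) volume := hGint.integral_prod_left
  -- identify slices
  have hGsl : ∀ x : EuclideanSpace ℝ (Fin d), x ∈ Ω → (fun y => G (x, y))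
      = (ball x ε ∩ Ω).indicator (fun y => g (x, y)) := by
    intro x hx
    funext y
    by_cases hy : y ∈ ball x ε ∩ Ω
    · rw [Set.indicator_of_mem hy, hG, Set.indicator_of_mem (by exact ⟨hx, hy⟩)]
    · rw [Set.indicator_of_notMem hy, hG, Set.indicator_of_notMem (by
        intro hmem; exact hy hmem.2)]
  have hGsl' : ∀ x : EuclideanSpace ℝ (Fin d), x ∉ Ω → (fun y => G (x, y)) = fun _ => (0:ℝ) := by
    intro x hx; funext y
    rw [hG, Set.indicator_of_notMem (by intro hmem; exact hx hmem.1)]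
  set F : EuclideanSpace ℝ (Fin d) → ℝ := fun x => ∫ y in ball x ε ∩ Ω, g (x, y) with hF
  have hball_ms : ∀ x : EuclideanSpace ℝ (Fin d), MeasurableSet (ball x ε ∩ Ω) :=
    fun x => (isOpen_ball.inter hΩo).measurableSet
  have hHF : (fun x => ∫ y, G (x, y)) = Ω.indicator F := by
    funext x
    by_cases hx : x ∈ Ω
    · rw [Set.indicator_of_mem hx, hF, hGsl x hx, integral_indicator (hball_ms x)]
    · rw [Set.indicator_of_notMem hx, hGsl' x hx, integral_zero]
  -- F is integrable on Ω, nonneg, with zero integral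
  have hFint : IntegrableOn F Ω := by
    have : Integrable (Ω.indicator F) volume := hHF ▸ hHint
    exact (integrable_indicator_iff hΩo.measurableSet).mp this
  have hFnn : ∀ x : EuclideanSpace ℝ (Fin d), 0 ≤ F x := by
    intro x
    apply setIntegral_nonneg (hball_ms x)
    intro y hy
    exact hgnn x y (mem_ball.mp hy.1)
  have hF0 : ∫ x in Ω, F x = 0 := by linarith [hzero]
  have hFae : F =ᵐ[volume.restrict Ω] 0 := by
    rw [← integral_eq_zero_iff_of_nonneg hFnn hFint]
    exact hF0
  -- a.e. slice vanishing
  have hae : ∀ᵐ x ∂(volume.restrict Ω),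
      (fun y => g (x, y)) =ᵐ[volume.restrict (ball x ε ∩ Ω)] 0 := by
    have hslice' : ∀ᵐ x ∂(volume.restrict Ω), Integrable (fun y => G (x, y)) volume :=
      ae_restrict_of_ae hslice
    have hmem : ∀ᵐ x ∂(volume.restrict Ω), x ∈ Ω := ae_restrict_mem hΩo.measurableSet
    filter_upwards [hFae, hslice', hmem] with x hx1 hx2 hx3
    have hint' : IntegrableOn (fun y => g (x, y)) (ball x ε ∩ Ω) := by
      have : Integrable ((ball x ε ∩ Ω).indicator fun y => g (x, y)) volume :=
        (hGsl x hx3) ▸ hx2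
      exact (integrable_indicator_iff (hball_ms x)).mp this
    have hz : ∫ y in ball x ε ∩ Ω, g (x, y) = 0 := hx1
    have hnnae : 0 ≤ᵐ[volume.restrict (ball x ε ∩ Ω)] fun y => g (x, y) := by
      filter_upwards [ae_restrict_mem (hball_ms x)] with y hy
      exact hgnn x y (mem_ball.mp hy.1)
    exact (integral_eq_zero_iff_of_nonneg_ae hnnae hint').mp hz
  -- continuity: pass from a.e. to everywhere
  set h' : EuclideanSpace ℝ (Fin d) × EuclideanSpace ℝ (Fin d) → ℝ :=
    fun p => ⟪w p.2 - w p.1, p.2 - p.1⟫ with hh'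
  have hcont : ContinuousOn h' S := by
    have c1 : ContinuousOn (fun p : EuclideanSpace ℝ (Fin d) × EuclideanSpace ℝ (Fin d) =>
        w p.2 - w p.1) S :=
      (hw.comp continuous_snd.continuousOn (fun p hp => hp.2.2)).sub
        (hw.comp continuous_fst.continuousOn (fun p hp => hp.1))
    have c2 : Continuous (fun p : EuclideanSpace ℝ (Fin d) × EuclideanSpace ℝ (Fin d) =>
        p.2 - p.1) := continuous_snd.sub continuous_fst
    exact c1.inner c2.continuousOn
  have hSzero : ∀ p ∈ S, h' p = 0 := by
    rintro ⟨x₀, y₀⟩ hp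
    by_contra hne
    have hca : ContinuousAt h' (x₀, y₀) := hcont.continuousAt (hSopen.mem_nhds hp)
    have hV : {q | h' q ≠ 0} ∈ nhds (x₀, y₀) := hca.preimage_mem_nhds (isOpen_ne.mem_nhds hne)
    have hVS : {q | h' q ≠ 0} ∩ S ∈ nhds (x₀, y₀) := Filter.inter_mem hV (hSopen.mem_nhds hp)
    obtain ⟨U1, U2, hU1o, hU2o, hx0, hy0, hsub⟩ :
        ∃ U1 U2, IsOpen U1 ∧ IsOpen U2 ∧ x₀ ∈ U1 ∧ y₀ ∈ U2 ∧
          U1 ×ˢ U2 ⊆ {q | h' q ≠ 0} ∩ S := by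
      rw [mem_nhds_prod_iff'] at hVS
      obtain ⟨u, v, hu, hxu, hv, hyv, hs⟩ := hVS
      exact ⟨u, v, hu, hv, hxu, hyv, hs⟩
    have hU1Ω : U1 ⊆ Ω := fun x hx => (hsub (Set.mk_mem_prod hx hy0)).2.1
    -- find a good point in U1
    have hx₁ : ∃ x ∈ U1, (fun y => g (x, y)) =ᵐ[volume.restrict (ball x ε ∩ Ω)] 0 := by
      by_contra hcon
      push_neg at hcon
      have hnull : (volume.restrict Ω)
          {x | ¬ ((fun y => g (x, y)) =ᵐ[volume.restrict (ball x ε ∩ Ω)] 0)} = 0 :=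
        ae_iff.mp hae
      have hsub1 : U1 ⊆
          {x | ¬ ((fun y => g (x, y)) =ᵐ[volume.restrict (ball x ε ∩ Ω)] 0)} :=
        fun x hx => hcon x hx
      have h0 : (volume.restrict Ω) U1 = 0 := measure_mono_null hsub1 hnull
      rw [Measure.restrict_apply' hΩo.measurableSet,
        Set.inter_eq_self_of_subset_left hU1Ω] at h0
      exact absurd h0 (ne_of_gt (hU1o.measure_pos volume ⟨x₀, hx0⟩))
    obtain ⟨x₁, hx₁U, hx₁P⟩ := hx₁
    -- every point of U2 is bad for x₁
    have hbad : ∀ y ∈ U2, g (x₁, y) ≠ 0 := by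
      intro y hy
      have hmem := hsub (Set.mk_mem_prod hx₁U hy)
      have hne' : h' (x₁, y) ≠ 0 := hmem.1
      have hyS : y ∈ ball x₁ ε ∩ Ω := hmem.2.2
      have hyx : y ≠ x₁ := by
        intro he
        apply hne'
        simp [hh', he]
      have hnorm : 0 < ‖y - x₁‖ := by rw [norm_pos_iff, sub_ne_zero]; exact hyx
      have hlt : ‖y - x₁‖ < ε := by rw [← dist_eq_norm]; exact mem_ball.mp hyS.1
      have hρ : 0 < ρ y x₁ := hρpos x₁ y hnorm hlt
      have hiu : ⟪w y - w x₁, unitVec y x₁⟫ = ‖y - x₁‖⁻¹ * h' (x₁, y) := by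
        rw [hh']
        simp only [unitVec, real_inner_smul_right]
      have hinn : ⟪w y - w x₁, unitVec y x₁⟫ ≠ 0 := by
        rw [hiu]
        exact mul_ne_zero (inv_ne_zero (ne_of_gt hnorm)) hne'
      exact mul_ne_zero (ne_of_gt hρ) (pow_ne_zero 2 hinn)
    have hU2sub : U2 ⊆ ball x₁ ε ∩ Ω :=
      fun y hy => (hsub (Set.mk_mem_prod hx₁U hy)).2.2
    have hnull2 : (volume.restrict (ball x₁ ε ∩ Ω)) {y | ¬ (g (x₁, y) = 0)} = 0 :=
      ae_iff.mp hx₁P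
    have h0 : (volume.restrict (ball x₁ ε ∩ Ω)) U2 = 0 :=
      measure_mono_null (fun y hy => hbad y hy) hnull2
    rw [Measure.restrict_apply' (hball_ms x₁),
      Set.inter_eq_self_of_subset_left hU2sub] at h0
    exact absurd h0 (ne_of_gt (hU2o.measure_pos volume ⟨y₀, hy0⟩))
  intro x hx y hy hd
  exact hSzero (x, y) ⟨hx, mem_ball.mpr hd, hy⟩

theorem stmt_13 (d : ℕ) (hd : d = 2 ∨ d = 3) (ε : ℝ) (hε : 0 < ε)
    (Ω : Set (EuclideanSpace ℝ (Fin d))) (hΩo : IsOpen Ω) (hΩc : IsConnected Ω)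
    (hΩb : Bornology.IsBounded Ω)
    (ρ : EuclideanSpace ℝ (Fin d) → EuclideanSpace ℝ (Fin d) → ℝ)
    (hρsym : ∀ x y, ρ y x = ρ x y)
    (hρpos : ∀ x y : EuclideanSpace ℝ (Fin d), 0 < ‖y - x‖ → ‖y - x‖ < ε → 0 < ρ y x)
    (w : EuclideanSpace ℝ (Fin d) → EuclideanSpace ℝ (Fin d))
    (hw : ContinuousOn w Ω)
    (hint : IntegrableOn
      (fun p : EuclideanSpace ℝ (Fin d) × EuclideanSpace ℝ (Fin d) =>
        ρ p.2 p.1 * ⟪w p.2 - w p.1, unitVec p.2 p.1⟫ ^ 2)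
      {p : EuclideanSpace ℝ (Fin d) × EuclideanSpace ℝ (Fin d) |
        p.1 ∈ Ω ∧ p.2 ∈ Metric.ball p.1 ε ∩ Ω})
    (hzero : (1 / 2) * ∫ x in Ω, ∫ y in Metric.ball x ε ∩ Ω,
        ρ y x * ⟪w y - w x, unitVec y x⟫ ^ 2 = 0) :
    ∃ (Q : EuclideanSpace ℝ (Fin d) →ₗ[ℝ] EuclideanSpace ℝ (Fin d))
      (c : EuclideanSpace ℝ (Fin d)),
      (∀ v u : EuclideanSpace ℝ (Fin d), ⟪Q v, u⟫ = -⟪v, Q u⟫) ∧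
      ∀ x ∈ Ω, w x = Q x + c := by
  classical
  have P := pointwise_zero ε hε Ω hΩo ρ hρpos w hw hint hzero
  -- local affine rigidity around each point
  have hloc : ∀ z ∈ Ω, ∃ r > 0, Metric.ball z r ⊆ Ω ∧
      ∃ L : EuclideanSpace ℝ (Fin d) →ₗ[ℝ] EuclideanSpace ℝ (Fin d),
        (∀ a b : EuclideanSpace ℝ (Fin d), ⟪L a, b⟫ = -⟪a, L b⟫) ∧
        ∀ x ∈ Metric.ball z r, w x = L x + (w z - L z) := by
    intro z hz
    obtain ⟨r0, hr0, hball⟩ := Metric.isOpen_iff.mp hΩo z hz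
    refine ⟨min r0 (ε / 2), lt_min hr0 (by positivity), ?_, ?_⟩
    · exact subset_trans (Metric.ball_subset_ball (min_le_left _ _)) hball
    · have hbΩ : Metric.ball z (min r0 (ε / 2)) ⊆ Ω :=
        subset_trans (Metric.ball_subset_ball (min_le_left _ _)) hball
      have hP : ∀ x ∈ Metric.ball z (min r0 (ε / 2)),
          ∀ y ∈ Metric.ball z (min r0 (ε / 2)), ⟪w y - w x, y - x⟫ = 0 := by
        intro x hx y hy
        apply P x (hbΩ hx) y (hbΩ hy)
        have h1 : dist y z < min r0 (ε / 2) := Metric.mem_ball.mp hy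
        have h2 : dist x z < min r0 (ε / 2) := Metric.mem_ball.mp hx
        have h3 := dist_triangle y z x
        have h4 : min r0 (ε / 2) ≤ ε / 2 := min_le_right _ _
        have h5 : dist z x = dist x z := dist_comm z x
        linarith
      obtain ⟨Q, hskew, hQ⟩ := local_rigid w z (min r0 (ε / 2))
        (lt_min hr0 (by positivity)) hP
      refine ⟨Q, hskew, fun x hx => ?_⟩
      rw [hQ x hx, map_sub]
      abel
  obtain ⟨z0, hz0⟩ := hΩc.nonempty
  obtain ⟨r0, hr0, hb0, Q, hskew, hQ0⟩ := hloc z0 hz0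
  refine ⟨Q, w z0 - Q z0, hskew, ?_⟩
  set c : EuclideanSpace ℝ (Fin d) := w z0 - Q z0 with hc
  set uS : Set (EuclideanSpace ℝ (Fin d)) :=
    {x | ∃ δ > 0, Metric.ball x δ ⊆ Ω ∧ ∀ y ∈ Metric.ball x δ, w y = Q y + c} with huS
  set vS : Set (EuclideanSpace ℝ (Fin d)) :=
    {x | ∃ δ > 0, Metric.ball x δ ⊆ Ω ∧
      ∃ L : EuclideanSpace ℝ (Fin d) →ₗ[ℝ] EuclideanSpace ℝ (Fin d),
      ∃ c' : EuclideanSpace ℝ (Fin d),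
        (∀ y ∈ Metric.ball x δ, w y = L y + c') ∧
        ¬ (∀ y : EuclideanSpace ℝ (Fin d), L y + c' = Q y + c)} with hvS
  have huo : IsOpen uS := by
    rw [Metric.isOpen_iff]
    rintro x ⟨δ, hδ, hsub, hval⟩
    refine ⟨δ / 2, by positivity, ?_⟩
    intro x' hx'
    have hsb : Metric.ball x' (δ / 2) ⊆ Metric.ball x δ := by
      apply Metric.ball_subset_ball'
      have := Metric.mem_ball.mp hx'
      linarith
    exact ⟨δ / 2, by positivity, subset_trans hsb hsub, fun y hy => hval y (hsb hy)⟩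
  have hvo : IsOpen vS := by
    rw [Metric.isOpen_iff]
    rintro x ⟨δ, hδ, hsub, L, c', hval, hnot⟩
    refine ⟨δ / 2, by positivity, ?_⟩
    intro x' hx'
    have hsb : Metric.ball x' (δ / 2) ⊆ Metric.ball x δ := by
      apply Metric.ball_subset_ball'
      have := Metric.mem_ball.mp hx'
      linarith
    exact ⟨δ / 2, by positivity, subset_trans hsb hsub, L, c',
      fun y hy => hval y (hsb hy), hnot⟩
  have hcover : Ω ⊆ uS ∪ vS := by
    intro z hz
    obtain ⟨r, hr, hbΩ, L, hLskew, hL⟩ := hloc z hz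
    by_cases hca : ∀ y : EuclideanSpace ℝ (Fin d), L y + (w z - L z) = Q y + c
    · left
      exact ⟨r, hr, hbΩ, fun y hy => by rw [hL y hy, hca y]⟩
    · right
      exact ⟨r, hr, hbΩ, L, w z - L z, hL, hca⟩
  have hune : (Ω ∩ uS).Nonempty :=
    ⟨z0, hz0, r0, hr0, hb0, fun y hy => by rw [hQ0 y hy]⟩
  by_cases hvne : (Ω ∩ vS).Nonempty
  · exfalso
    obtain ⟨x, hxΩ, hxu, hxv⟩ := hΩc.isPreconnected uS vS huo hvo hcover hune hvne
    obtain ⟨δ1, hδ1, hsub1, hval1⟩ := hxu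
    obtain ⟨δ2, hδ2, hsub2, L, c', hval2, hnot⟩ := hxv
    apply hnot
    have hδ : (0:ℝ) < min δ1 δ2 := lt_min hδ1 hδ2
    have key : ∀ y ∈ Metric.ball x (min δ1 δ2), (L - Q) y + (c' - c) = 0 := by
      intro y hy
      have h1 := hval1 y (Metric.ball_subset_ball (min_le_left _ _) hy)
      have h2 := hval2 y (Metric.ball_subset_ball (min_le_right _ _) hy)
      rw [LinearMap.sub_apply]
      rw [h1] at h2
      have : L y + c' = Q y + c := h2.symm
      rw [sub_add_sub_comm, this, sub_self]
    have := aff_zero (L - Q) (c' - c) x (min δ1 δ2) hδ key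
    intro y
    have h := this y
    rw [LinearMap.sub_apply, sub_add_sub_comm, sub_eq_zero] at h
    exact h
  · intro x hx
    rcases hcover hx with hxu | hxv
    · obtain ⟨δ, hδ, _, hval⟩ := hxu
      exact hval x (Metric.mem_ball_self hδ)
    · exact absurd ⟨x, hx, hxv⟩ hvne
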